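/- arXiv:2503.05172 — 5 statements merged into one kernel-verified Lean document; each statement's English description precedes it below -/
import Mathlib

section
/- For complex numbers α₁₂, α₁₃, α₂₃ with |α₁₂|² + |α₁₃|² + |α₂₃|² = 1, the quantity √((1 + |α₁₃² − 2α₁₂α₂₃|²)/2) lies in the interval [1/2, 1]. -/
theorem antisym_chsh_parameter_range (a12 a13 a23 : ℂ)
    (h : ‖a12‖ ^ 2 + ‖a13‖ ^ 2 + ‖a23‖ ^ 2 = 1) :
    Real.sqrt ((1 + ‖a13 ^ 2 - 2 * a12 * a23‖ ^ 2) / 2) ∈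
      Set.Icc (1 / 2 : ℝ) 1 := by
  set K : ℝ := ‖a13 ^ 2 - 2 * a12 * a23‖ with hK
  have hK0 : 0 ≤ K := norm_nonneg _
  have hK1 : K ≤ 1 := by
    have h1 : K ≤ ‖a13 ^ 2‖ + ‖2 * a12 * a23‖ := by
      exact norm_sub_le _ _
    have h2 : ‖a13 ^ 2‖ = ‖a13‖ ^ 2 := by
      simp [map_pow]
    have h3 : ‖2 * a12 * a23‖ = 2 * (‖a12‖ * ‖a23‖) := by
      simp [map_mul]; ring
    have h4 : 2 * (‖a12‖ * ‖a23‖) ≤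
        ‖a12‖ ^ 2 + ‖a23‖ ^ 2 := by
      nlinarith [sq_nonneg (‖a12‖ - ‖a23‖)]
    nlinarith
  constructor
  · have : (1/2 : ℝ) ≤ (1 + K ^ 2) / 2 := by nlinarith
    calc (1/2 : ℝ) = Real.sqrt ((1/2)^2) := by
          rw [Real.sqrt_sq]; norm_num
      _ ≤ Real.sqrt ((1 + K ^ 2) / 2) := by
          apply Real.sqrt_le_sqrt; nlinarith
  · have : (1 + K ^ 2) / 2 ≤ 1 := by nlinarith
    calc Real.sqrt ((1 + K ^ 2) / 2) ≤ Real.sqrt 1 := Real.sqrt_le_sqrt this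
      _ = 1 := Real.sqrt_one
end

section
/- For complex numbers α₁₁, α₂₂, α₃₃ with |α₁₁|² + |α₂₂|² + |α₃₃|² = 1, one has |conj(α₁₁)·α₂₂ + conj(α₂₂)·α₃₃|² + (|α₁₁|² + |α₃₃|²)² ≤ 1 − |α₂₂|⁴ ≤ 1. -/
theorem sym_chsh_bound_case2 (a11 a22 a33 : ℂ)
    (h : ‖a11‖ ^ 2 + ‖a22‖ ^ 2 + ‖a33‖ ^ 2 = 1) :
    ‖(starRingEnd ℂ) a11 * a22 + (starRingEnd ℂ) a22 * a33‖ ^ 2 +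
      (‖a11‖ ^ 2 + ‖a33‖ ^ 2) ^ 2 ≤ 1 - ‖a22‖ ^ 4 ∧
    1 - ‖a22‖ ^ 4 ≤ 1 := by
  have h1 : ‖(starRingEnd ℂ) a11 * a22 + (starRingEnd ℂ) a22 * a33‖ ≤
      ‖a11‖ * ‖a22‖ + ‖a22‖ * ‖a33‖ := by
    calc ‖(starRingEnd ℂ) a11 * a22 + (starRingEnd ℂ) a22 * a33‖
        ≤ ‖(starRingEnd ℂ) a11 * a22‖ + ‖(starRingEnd ℂ) a22 * a33‖ :=
          norm_add_le _ _
      _ = ‖a11‖ * ‖a22‖ + ‖a22‖ * ‖a33‖ := by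
          simp [map_mul]
  have n1 := norm_nonneg a11
  have n2 := norm_nonneg a22
  have n3 := norm_nonneg a33
  have n0 := norm_nonneg ((starRingEnd ℂ) a11 * a22 + (starRingEnd ℂ) a22 * a33)
  constructor
  · nlinarith [sq_nonneg (‖a11‖ - ‖a33‖), sq_nonneg (‖a11‖ * ‖a22‖ + ‖a22‖ * ‖a33‖), mul_nonneg n1 n2, mul_nonneg n2 n3, sq_nonneg (‖a22‖ * (‖a11‖ - ‖a33‖))]
  · nlinarith [sq_nonneg (‖a22‖ ^ 2)]
end

section
/- Let ψ ∈ ℂ³ ⊗ ℂ³ be the antisymmetric unit vector with coefficients α₁₂, α₁₃, α₂₃ (so |α₁₂|² + |α₁₃|² + |α₂₃|² = 1) in the basis {(|12⟩−|21⟩)/√2, (|13⟩−|31⟩)/√2, (|23⟩−|32⟩)/√2}. Then the reduced density matrix ρ₁ (partial trace of |ψ⟩⟨ψ| over the second factor) satisfies tr(ρ₁²) = 1/2. -/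
/-- Coefficient matrix of the antisymmetric two-qutrit vector
`ψ = α₁₂(|12⟩−|21⟩)/√2 + α₁₃(|13⟩−|31⟩)/√2 + α₂₃(|23⟩−|32⟩)/√2`:
entry `(i, j)` is the coefficient of `|i⟩ ⊗ |j⟩`. -/
noncomputable def asymCoeff (a12 a13 a23 : ℂ) : Matrix (Fin 3) (Fin 3) ℂ :=
  (Real.sqrt 2 : ℂ)⁻¹ • !![0, a12, a13; -a12, 0, a23; -a13, -a23, 0]

/-- Reduced density matrix on the first factor: `ρ₁ i i' = ∑ j, ψ i j * conj (ψ i' j)`. -/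
noncomputable def reducedState (ψ : Matrix (Fin 3) (Fin 3) ℂ) : Matrix (Fin 3) (Fin 3) ℂ :=
  fun i i' => ∑ j, ψ i j * (starRingEnd ℂ) (ψ i' j)

theorem asym_reduced_purity (a12 a13 a23 : ℂ)
    (h : ‖a12‖ ^ 2 + ‖a13‖ ^ 2 + ‖a23‖ ^ 2 = 1) :
    (reducedState (asymCoeff a12 a13 a23) * reducedState (asymCoeff a12 a13 a23)).trace
      = 1 / 2 := by
  have hn : a12 * (starRingEnd ℂ) a12 + a13 * (starRingEnd ℂ) a13 + a23 * (starRingEnd ℂ) a23 = 1 := by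
    have := congrArg (Complex.ofReal) h
    push_cast at this
    rw [← this]
    simp only [Complex.mul_conj, ← Complex.sq_norm]
    push_cast; ring
  have h2 : ((Real.sqrt 2 : ℝ) : ℂ) * ((Real.sqrt 2 : ℝ) : ℂ) = 2 := by
    norm_cast
    exact Real.mul_self_sqrt (by norm_num)
  set M : Matrix (Fin 3) (Fin 3) ℂ := !![0, a12, a13; -a12, 0, a23; -a13, -a23, 0] with hM
  have key : reducedState (asymCoeff a12 a13 a23) = (2:ℂ)⁻¹ • reducedState M := by
    funext i i'
    simp only [reducedState, asymCoeff, ← hM, Matrix.smul_apply, smul_eq_mul, map_mul,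
      map_inv₀, Complex.conj_ofReal, Matrix.smul_apply, Finset.smul_sum]
    rw [Finset.mul_sum]
    apply Finset.sum_congr rfl
    intro j _
    have hc : ((Real.sqrt 2 : ℝ) : ℂ)⁻¹ * ((Real.sqrt 2 : ℝ) : ℂ)⁻¹ = (2:ℂ)⁻¹ := by
      rw [← mul_inv, h2]
    linear_combination (M i j * (starRingEnd ℂ) (M i' j)) * hc
  rw [key]
  have : ((2:ℂ)⁻¹ • reducedState M) * ((2:ℂ)⁻¹ • reducedState M)
      = ((4:ℂ)⁻¹) • (reducedState M * reducedState M) := by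
    rw [Matrix.smul_mul, Matrix.mul_smul, smul_smul]; norm_num
  rw [this, Matrix.trace_smul]
  have htr : (reducedState M * reducedState M).trace = 2 := by
    simp [reducedState, hM, Matrix.trace, Matrix.diag, Matrix.mul_apply, Fin.sum_univ_three]
    linear_combination (2 * (a12*(starRingEnd ℂ) a12 + a13*(starRingEnd ℂ) a13 + a23*(starRingEnd ℂ) a23) + 2) * hn
  rw [htr]
  norm_num
end

section
/- Let ψ ∈ ℂ³ ⊗ ℂ³ be the antisymmetric state with normalized coefficients α₁₂, α₁₃, α₂₃. Then the concurrence C(ψ) = √(2·(1 − tr(ρ₁²))) equals 1, where ρ₁ is the reduced state; in particular every such state is entangled. -/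
set_option maxHeartbeats 2000000 in
private lemma asym_trace_sq (a12 a13 a23 : ℂ)
    (h : ‖a12‖ ^ 2 + ‖a13‖ ^ 2 + ‖a23‖ ^ 2 = 1) :
    (reducedState (asymCoeff a12 a13 a23) * reducedState (asymCoeff a12 a13 a23)).trace = 1/2 := by
  have hc : a12 * (starRingEnd ℂ) a12 + a13 * (starRingEnd ℂ) a13 + a23 * (starRingEnd ℂ) a23 = 1 := by
    rw [Complex.mul_conj, Complex.mul_conj, Complex.mul_conj]
    norm_cast
    simpa [Complex.sq_norm] using h
  have hs : ((Real.sqrt 2 : ℝ) : ℂ) ≠ 0 := by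
    norm_cast; positivity
  have hs2 : ((Real.sqrt 2 : ℝ) : ℂ) * ((Real.sqrt 2 : ℝ) : ℂ) = 2 := by
    norm_cast
    rw [Real.mul_self_sqrt] <;> norm_num
  simp only [Matrix.trace, Matrix.diag, Matrix.mul_apply, reducedState, asymCoeff,
    Fin.sum_univ_three, Matrix.smul_apply, Matrix.cons_val', Matrix.cons_val_zero,
    Matrix.cons_val_one, Matrix.head_cons, Matrix.empty_val', Matrix.cons_val_fin_one,
    Matrix.head_fin_const, Matrix.cons_val_two, Matrix.tail_cons, smul_eq_mul,
    map_mul, map_inv₀, Complex.conj_ofReal, Matrix.of_apply, map_zero, map_neg]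
  field_simp
  have hc2 : (a12 * (starRingEnd ℂ) a12 + a13 * (starRingEnd ℂ) a13 + a23 * (starRingEnd ℂ) a23)^2 = 1 := by rw [hc]; ring
  linear_combination (4:ℂ) * hc2 - (((Real.sqrt 2:ℝ):ℂ)*((Real.sqrt 2:ℝ):ℂ) + 2) * hs2

theorem asym_concurrence_eq_one (a12 a13 a23 : ℂ)
    (h : ‖a12‖ ^ 2 + ‖a13‖ ^ 2 + ‖a23‖ ^ 2 = 1) :
    Real.sqrt (2 * (1 -
      (reducedState (asymCoeff a12 a13 a23) * reducedState (asymCoeff a12 a13 a23)).trace.re))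
      = 1 := by
  rw [asym_trace_sq a12 a13 a23 h]
  norm_num
end

section
/- For the two-qutrit GHZ state ψ = (|11⟩ + |22⟩ + |33⟩)/√3, the concurrence C(ψ) = √(2(1 − tr ρ₁²)) equals 2/√3, and the spin-1 CHSH parameter √2·|conj(α₁₁)α₂₂ + conj(α₂₂)α₃₃| with α_{ii} = 1/√3 equals √(8/9), which is strictly less than 1. -/
/-- Coefficient matrix of the two-qutrit GHZ state `ψ = (|11⟩ + |22⟩ + |33⟩)/√3`. -/
noncomputable def ghzCoeff : Matrix (Fin 3) (Fin 3) ℂ :=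
  Matrix.diagonal ![(Real.sqrt 3 : ℂ)⁻¹, (Real.sqrt 3 : ℂ)⁻¹, (Real.sqrt 3 : ℂ)⁻¹]

lemma key : ((Real.sqrt 3 : ℂ)⁻¹ * (starRingEnd ℂ) (Real.sqrt 3 : ℂ)⁻¹) = 1/3 := by
  rw [map_inv₀, Complex.conj_ofReal, ← mul_inv, ← Complex.ofReal_mul,
    Real.mul_self_sqrt (by norm_num)]
  norm_num

lemma trace_eq : (reducedState ghzCoeff * reducedState ghzCoeff).trace.re = 1/3 := by
  simp [reducedState, ghzCoeff, Matrix.trace, Matrix.mul_apply, Matrix.diagonal,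
    Fin.sum_univ_three, key, mul_comm]
  nlinarith [Real.mul_self_sqrt (by norm_num : (0:ℝ) ≤ 3)]

theorem ghz_concurrence_and_chsh_parameter :
    Real.sqrt (2 * (1 - (reducedState ghzCoeff * reducedState ghzCoeff).trace.re))
      = 2 / Real.sqrt 3 ∧
    Real.sqrt 2 * ‖
        ((starRingEnd ℂ) (Real.sqrt 3 : ℂ)⁻¹ * (Real.sqrt 3 : ℂ)⁻¹ +
          (starRingEnd ℂ) (Real.sqrt 3 : ℂ)⁻¹ * (Real.sqrt 3 : ℂ)⁻¹)‖
      = Real.sqrt (8 / 9) ∧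
    Real.sqrt (8 / 9) < 1 := by
  refine ⟨?_, ?_, ?_⟩
  · rw [trace_eq]
    rw [show (2 * (1 - 1/3) : ℝ) = 4/3 by norm_num]
    rw [show (4/3 : ℝ) = (2/Real.sqrt 3)^2 by
      rw [div_pow, Real.sq_sqrt (by norm_num)]; norm_num]
    exact Real.sqrt_sq (by positivity)
  · rw [mul_comm ((starRingEnd ℂ) _) _] at *
    rw [key]
    rw [show ((1:ℂ)/3 + 1/3) = ((2/3 : ℝ) : ℂ) by push_cast; ring]
    rw [Complex.norm_real, Real.norm_eq_abs, abs_of_pos (by norm_num),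
      show (8/9 : ℝ) = 2 * (2/3)^2 by norm_num,
      Real.sqrt_mul (by norm_num), Real.sqrt_sq (by norm_num)]
  · rw [show (1:ℝ) = Real.sqrt 1 by simp]
    exact Real.sqrt_lt_sqrt (by norm_num) (by norm_num)
end
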